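/- Let G and H be groups with subgroups L ≤ G and M ≤ H. The free product of G and H with commuting subgroups L and M, defined as the quotient of G ∗ H by the normal closure of {[ℓ,m] : ℓ ∈ L, m ∈ M}, is isomorphic to the amalgamated free product G ∗_L (L × M) ∗_M H, where L is identified with L × {1} and M with {1} × M. -/

import Mathlib

open Monoid
open scoped commutatorElement

variable (G H : Type*) [Group G] [Group H] (L : Subgroup G) (M : Subgroup H)

/-- The free product of `G` and `H` with commuting subgroups `L` and `M`: the quotient of
`G ∗ H` by the normal closure of the commutators `[ℓ, m]`, `ℓ ∈ L`, `m ∈ M`. -/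
def FreeProdCommuting :=
  Coprod G H ⧸ Subgroup.normalClosure
    {x : Coprod G H | ∃ l ∈ L, ∃ m ∈ M, x = ⁅(Coprod.inl l : Coprod G H), Coprod.inr m⁆}

instance : Group (FreeProdCommuting G H L M) := by
  unfold FreeProdCommuting; infer_instance

/-- The relations defining the amalgamated product `G ∗_L (L × M) ∗_M H` as a quotient of the
free product `(G ∗ (L × M)) ∗ H`: `L ≤ G` is identified with `L × {1} ≤ L × M` and
`M ≤ H` is identified with `{1} × M ≤ L × M`. -/
def amalgamRels : Subgroup (Coprod (Coprod G (L × M)) H) :=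
  Subgroup.normalClosure
    ({x : Coprod (Coprod G (L × M)) H | ∃ l : L,
        x = (Coprod.inl (Coprod.inl (l : G)) : Coprod (Coprod G (L × M)) H) *
          ((Coprod.inl (Coprod.inr ((l, 1) : L × M)) : Coprod (Coprod G (L × M)) H))⁻¹} ∪
     {x : Coprod (Coprod G (L × M)) H | ∃ m : M,
        x = (Coprod.inl (Coprod.inr ((1, m) : L × M)) : Coprod (Coprod G (L × M)) H) *
          ((Coprod.inr (m : H) : Coprod (Coprod G (L × M)) H))⁻¹})

instance : (amalgamRels G H L M).Normal := by
  unfold amalgamRels; infer_instance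

/-- The amalgamated free product `G ∗_L (L × M) ∗_M H`. -/
def Amalgam := Coprod (Coprod G (L × M)) H ⧸ amalgamRels G H L M

instance : Group (Amalgam G H L M) := by
  unfold Amalgam; infer_instance

-- aux
abbrev fpcRels : Subgroup (Coprod G H) :=
  Subgroup.normalClosure
    {x : Coprod G H | ∃ l ∈ L, ∃ m ∈ M, x = ⁅(Coprod.inl l : Coprod G H), Coprod.inr m⁆}

def mkF : Coprod G H →* FreeProdCommuting G H L M := QuotientGroup.mk' (fpcRels G H L M)

def mkA : Coprod (Coprod G (L × M)) H →* Amalgam G H L M := QuotientGroup.mk' (amalgamRels G H L M)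

lemma fpc_comm (l : L) (m : M) :
    Commute (mkF G H L M (Coprod.inl (l : G))) (mkF G H L M (Coprod.inr (m : H))) := by
  rw [← commutatorElement_eq_one_iff_commute, ← map_commutatorElement]
  exact (QuotientGroup.eq_one_iff _).2 <| Subgroup.subset_normalClosure ⟨l, l.2, m, m.2, rfl⟩

lemma amalgam_l (l : L) :
    mkA G H L M (Coprod.inl (Coprod.inl (l : G))) =
      mkA G H L M (Coprod.inl (Coprod.inr ((l, 1) : L × M))) := by
  have h : mkA G H L M ((Coprod.inl (Coprod.inl (l : G)) : Coprod (Coprod G (L × M)) H) *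
      ((Coprod.inl (Coprod.inr ((l, 1) : L × M)) : Coprod (Coprod G (L × M)) H))⁻¹) = 1 :=
    (QuotientGroup.eq_one_iff _).2 <| Subgroup.subset_normalClosure (Or.inl ⟨l, rfl⟩)
  rw [map_mul] at h
  have h2 : mkA G H L M (((Coprod.inl (Coprod.inr ((l, 1) : L × M)) :
      Coprod (Coprod G (L × M)) H))⁻¹) =
      (mkA G H L M (Coprod.inl (Coprod.inr ((l, 1) : L × M))))⁻¹ := by
    exact map_inv (mkA G H L M) _
  rw [h2] at h
  exact mul_inv_eq_one.mp h

lemma amalgam_m (m : M) :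
    mkA G H L M (Coprod.inl (Coprod.inr ((1, m) : L × M))) =
      mkA G H L M (Coprod.inr (m : H)) := by
  have h : mkA G H L M ((Coprod.inl (Coprod.inr ((1, m) : L × M)) : Coprod (Coprod G (L × M)) H) *
      ((Coprod.inr (m : H) : Coprod (Coprod G (L × M)) H))⁻¹) = 1 :=
    (QuotientGroup.eq_one_iff _).2 <| Subgroup.subset_normalClosure (Or.inr ⟨m, rfl⟩)
  rw [map_mul] at h
  have h2 : mkA G H L M (((Coprod.inr (m : H) : Coprod (Coprod G (L × M)) H))⁻¹) =
      (mkA G H L M (Coprod.inr (m : H)))⁻¹ := by exact map_inv (mkA G H L M) _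
  rw [h2] at h
  exact mul_inv_eq_one.mp h

lemma amalgam_prod_mul (p q : L × M) :
    mkA G H L M (Coprod.inl (Coprod.inr p)) * mkA G H L M (Coprod.inl (Coprod.inr q)) =
      mkA G H L M (Coprod.inl (Coprod.inr (p * q))) := by
  rw [map_mul, map_mul, map_mul]

lemma amalgam_comm (l : L) (m : M) :
    Commute (mkA G H L M (Coprod.inl (Coprod.inl (l : G)))) (mkA G H L M (Coprod.inr (m : H))) := by
  rw [amalgam_l, ← amalgam_m]
  show _ * _ = _ * _
  rw [amalgam_prod_mul, amalgam_prod_mul]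
  congr 1
  simp [Prod.ext_iff]

def Φ₀ : Coprod G H →* Amalgam G H L M :=
  (mkA G H L M).comp (Coprod.lift (P := Coprod (Coprod G (L × M)) H) (Coprod.inl.comp Coprod.inl) Coprod.inr)

def φ : FreeProdCommuting G H L M →* Amalgam G H L M :=
  QuotientGroup.lift (fpcRels G H L M) (Φ₀ G H L M) <| by
    refine Subgroup.normalClosure_le_normal ?_
    rintro _ ⟨l, hl, m, hm, rfl⟩
    simp only [SetLike.mem_coe, MonoidHom.mem_ker, map_commutatorElement,
      commutatorElement_eq_one_iff_commute]
    simp only [Φ₀, MonoidHom.comp_apply, Coprod.lift_apply_inl, Coprod.lift_apply_inr]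
    exact amalgam_comm G H L M ⟨l, hl⟩ ⟨m, hm⟩

def j : L × M →* FreeProdCommuting G H L M :=
  MonoidHom.mk' (fun p => mkF G H L M (Coprod.inl (p.1 : G)) * mkF G H L M (Coprod.inr (p.2 : H)))
    (by
      rintro ⟨l, m⟩ ⟨l', m'⟩
      show mkF G H L M (Coprod.inl ((l * l' : L) : G)) *
          mkF G H L M (Coprod.inr ((m * m' : M) : H)) = _
      rw [Subgroup.coe_mul, Subgroup.coe_mul, map_mul, map_mul, map_mul, map_mul]
      exact (fpc_comm G H L M l' m).mul_mul_mul_comm _ _)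

def Ψ₀ : Coprod (Coprod G (L × M)) H →* FreeProdCommuting G H L M :=
  Coprod.lift (Coprod.lift ((mkF G H L M).comp Coprod.inl) (j G H L M))
    ((mkF G H L M).comp Coprod.inr)

def ψ : Amalgam G H L M →* FreeProdCommuting G H L M :=
  QuotientGroup.lift (amalgamRels G H L M) (Ψ₀ G H L M) <| by
    refine Subgroup.normalClosure_le_normal ?_
    rintro _ (⟨l, rfl⟩ | ⟨m, rfl⟩)
    · simp only [SetLike.mem_coe, MonoidHom.mem_ker, map_mul]
      have h2 : Ψ₀ G H L M (((Coprod.inl (Coprod.inr ((l, 1) : L × M)) :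
          Coprod (Coprod G (L × M)) H))⁻¹) =
          (Ψ₀ G H L M (Coprod.inl (Coprod.inr ((l, 1) : L × M))))⁻¹ := by
        exact map_inv (Ψ₀ G H L M) _
      rw [h2, mul_inv_eq_one]
      simp [Ψ₀, j, Coprod.lift_apply_inl, Coprod.lift_apply_inr, MonoidHom.mk'_apply]
    · simp only [SetLike.mem_coe, MonoidHom.mem_ker, map_mul]
      have h2 : Ψ₀ G H L M (((Coprod.inr (m : H) : Coprod (Coprod G (L × M)) H))⁻¹) =
          (Ψ₀ G H L M (Coprod.inr (m : H)))⁻¹ := by exact map_inv (Ψ₀ G H L M) _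
      rw [h2, mul_inv_eq_one]
      simp [Ψ₀, j, Coprod.lift_apply_inl, Coprod.lift_apply_inr, MonoidHom.mk'_apply]

lemma comp1 : (ψ G H L M).comp (φ G H L M) = MonoidHom.id _ := by
  apply QuotientGroup.monoidHom_ext (fpcRels G H L M)
  apply Coprod.hom_ext <;> ext x <;> rfl

lemma comp2 : (φ G H L M).comp (ψ G H L M) = MonoidHom.id _ := by
  apply QuotientGroup.monoidHom_ext (amalgamRels G H L M)
  apply Coprod.hom_ext
  · apply Coprod.hom_ext
    · ext x
      rfl
    · ext p
      obtain ⟨l, m⟩ := p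
      show (φ G H L M) ((ψ G H L M) (mkA G H L M (Coprod.inl (Coprod.inr (l, m))))) =
        mkA G H L M (Coprod.inl (Coprod.inr (l, m)))
      have h1 : (ψ G H L M) (mkA G H L M (Coprod.inl (Coprod.inr (l, m)))) =
          mkF G H L M (Coprod.inl (l : G)) * mkF G H L M (Coprod.inr (m : H)) := rfl
      have h2 : ∀ y : Coprod G H, (φ G H L M) (mkF G H L M y) = Φ₀ G H L M y := fun y =>
        QuotientGroup.lift_mk' _ _ _
      rw [h1, map_mul, h2, h2]
      simp only [Φ₀, MonoidHom.comp_apply, Coprod.lift_apply_inl, Coprod.lift_apply_inr]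
      rw [amalgam_l, ← amalgam_m, amalgam_prod_mul]
      congr 2
      simp [Prod.ext_iff]
  · ext x
    rfl

/-- The free product of `G` and `H` with commuting subgroups `L ≤ G` and `M ≤ H` is
isomorphic to the amalgamated free product `G ∗_L (L × M) ∗_M H`; the isomorphism is
compatible with the canonical copies of `G` and `H` on both sides. -/
theorem freeProdCommuting_iso_amalgam :
    ∃ e : FreeProdCommuting G H L M ≃* Amalgam G H L M,
      (∀ g : G, e (QuotientGroup.mk (Coprod.inl g)) =
        (QuotientGroup.mk (Coprod.inl (Coprod.inl g)) : Amalgam G H L M)) ∧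
      (∀ h : H, e (QuotientGroup.mk (Coprod.inr h)) =
        (QuotientGroup.mk (Coprod.inr h) : Amalgam G H L M)) := by
  refine ⟨MonoidHom.toMulEquiv (φ G H L M) (ψ G H L M) (comp1 G H L M) (comp2 G H L M),
    fun g => ?_, fun h => ?_⟩ <;> rfl
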